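/- Let a ∈ ℝ and r ∈ ℝ with r ≠ 0, set s = (a² + r²)/r, let 𝔤 be the Lie algebra with basis f₁,...,f₅ and structure equations df¹ = 0, df² = r f^{12} + a f^{13} + a f^{24} + (a(r² + a²)/(2r)) f^{25} + (a²/r) f^{34} + (a²(r² + a²)/(2r²)) f^{35}, df³ = a f^{12} + (a²/r) f^{13} − r f^{24} − ((r² + a²)/2) f^{25} − a f^{34} − (a(r² + a²)/(2r)) f^{35}, df⁴ = −((r² + a²)²/(2r²)) f^{15} + ((r² + a²)/r) f^{23}, df⁵ = −2f^{14} − 2f^{23}, and let 𝔤̃ be the Lie algebra with basis e₁,...,e₅ and structure equations de¹ = 0, de² = s e^{34} + (s²/2) e^{35}, de³ = s e^{13}, de⁴ = −(s²/2) e^{15} + s e^{23}, de⁵ = −2e^{14} − 2e^{23}. Then the hypo-contact structure η = f⁵, ω₁ = f^{12} + f^{34}, ω₂ = f^{13} − f^{24}, ω₃ = f^{14} + f^{23} on 𝔤 is equivalent by rotation to the hypo-contact structure η̃ = e⁵, ω̃₁ = e^{12} + e^{34}, ω̃₂ = e^{13} − e^{24}, ω̃₃ = e^{14} + e^{23} on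 𝔤̃. -/

import Mathlib

noncomputable section

/-- Chevalley–Eilenberg differential of a 1-form on a Lie algebra. -/
def dOne {V : Type*} [LieRing V] [LieAlgebra ℝ V] (α : V → ℝ) (x y : V) : ℝ :=
  -α ⁅x, y⁆

/-- Chevalley–Eilenberg differential of a 2-form on a Lie algebra. -/
def dTwo {V : Type*} [LieRing V] [LieAlgebra ℝ V] (ω : V → V → ℝ) (x y z : V) : ℝ :=
  -ω ⁅x, y⁆ z + ω ⁅x, z⁆ y - ω ⁅y, z⁆ x

/-- Chevalley–Eilenberg differential of a 3-form on a Lie algebra. -/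
def dThree {V : Type*} [LieRing V] [LieAlgebra ℝ V] (σ : V → V → V → ℝ)
    (x y z w : V) : ℝ :=
  -σ ⁅x, y⁆ z w + σ ⁅x, z⁆ y w - σ ⁅x, w⁆ y z
    - σ ⁅y, z⁆ x w + σ ⁅y, w⁆ x z - σ ⁅z, w⁆ x y

/-- Wedge product of two 1-forms, as an alternating bilinear map. -/
def wedge1 {V : Type*} [LieRing V] [LieAlgebra ℝ V] (α β : V →ₗ[ℝ] ℝ) :
    V →ₗ[ℝ] V →ₗ[ℝ] ℝ :=
  LinearMap.mk₂ ℝ (fun x y => α x * β y - α y * β x)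
    (fun m₁ m₂ n => by simp [map_add]; ring)
    (fun c m n => by simp [map_smul, smul_eq_mul]; ring)
    (fun m n₁ n₂ => by simp [map_add]; ring)
    (fun c m n => by simp [map_smul, smul_eq_mul]; ring)

/-- Wedge product of a 1-form and a 2-form. -/
def wedge12 {V : Type*} (α : V → ℝ) (ω : V → V → ℝ) (x y z : V) : ℝ :=
  α x * ω y z - α y * ω x z + α z * ω x y

/-- Wedge product of two 2-forms. -/
def wedge22 {V : Type*} (ω τ : V → V → ℝ) (x y z w : V) : ℝ :=
  ω x y * τ z w - ω x z * τ y w + ω x w * τ y z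
    + ω y z * τ x w - ω y w * τ x z + ω z w * τ x y

/-- Wedge product of a 4-form and a 1-form. -/
def wedge41 {V : Type*} (v : V → V → V → V → ℝ) (α : V → ℝ)
    (x₀ x₁ x₂ x₃ x₄ : V) : ℝ :=
  α x₀ * v x₁ x₂ x₃ x₄ - α x₁ * v x₀ x₂ x₃ x₄ + α x₂ * v x₀ x₁ x₃ x₄
    - α x₃ * v x₀ x₁ x₂ x₄ + α x₄ * v x₀ x₁ x₂ x₃

/-- An SU(2)-structure on a 5-dimensional real Lie algebra. -/
structure IsSU2Structure {V : Type*} [LieRing V] [LieAlgebra ℝ V]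
    (η : V →ₗ[ℝ] ℝ) (ω₁ ω₂ ω₃ : V →ₗ[ℝ] V →ₗ[ℝ] ℝ) : Prop where
  alt1 : ∀ x, ω₁ x x = 0
  alt2 : ∀ x, ω₂ x x = 0
  alt3 : ∀ x, ω₃ x x = 0
  vol : ∃ v : V → V → V → V → ℝ,
    wedge22 (fun a b => ω₁ a b) (fun a b => ω₁ a b) = v ∧
    wedge22 (fun a b => ω₂ a b) (fun a b => ω₂ a b) = v ∧
    wedge22 (fun a b => ω₃ a b) (fun a b => ω₃ a b) = v ∧
    wedge22 (fun a b => ω₁ a b) (fun a b => ω₂ a b) = (fun _ _ _ _ => 0) ∧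
    wedge22 (fun a b => ω₁ a b) (fun a b => ω₃ a b) = (fun _ _ _ _ => 0) ∧
    wedge22 (fun a b => ω₂ a b) (fun a b => ω₃ a b) = (fun _ _ _ _ => 0) ∧
    wedge41 v (fun x => η x) ≠ (fun _ _ _ _ _ => 0)
  compat : ∀ X Y : V, (∀ z, ω₃ X z = ω₁ Y z) → 0 ≤ ω₂ X Y

/-- A hypo-contact structure on a 5-dimensional real Lie algebra. -/
structure IsHypoContact {V : Type*} [LieRing V] [LieAlgebra ℝ V]
    (η : V →ₗ[ℝ] ℝ) (ω₁ ω₂ ω₃ : V →ₗ[ℝ] V →ₗ[ℝ] ℝ)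
    extends IsSU2Structure η ω₁ ω₂ ω₃ : Prop where
  contact : ∀ x y, dOne (fun z => η z) x y = -2 * ω₃ x y
  closed1 : ∀ x y z w, dThree (wedge12 (fun z => η z) (fun a b => ω₁ a b)) x y z w = 0
  closed2 : ∀ x y z w, dThree (wedge12 (fun z => η z) (fun a b => ω₂ a b)) x y z w = 0

/-- The Lie algebra `𝔥₁`. -/
def IsH1 (V : Type*) [LieRing V] [LieAlgebra ℝ V] : Prop :=
  ∃ X : Module.Basis (Fin 5) ℝ V,
    ⁅X 0, X 1⁆ = 0 ∧ ⁅X 0, X 2⁆ = 0 ∧ ⁅X 0, X 3⁆ = X 4 ∧ ⁅X 0, X 4⁆ = 0 ∧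
    ⁅X 1, X 2⁆ = X 4 ∧ ⁅X 1, X 3⁆ = 0 ∧ ⁅X 1, X 4⁆ = 0 ∧
    ⁅X 2, X 3⁆ = 0 ∧ ⁅X 2, X 4⁆ = 0 ∧ ⁅X 3, X 4⁆ = 0

/-- The Lie algebra `𝔥₂`. -/
def IsH2 (V : Type*) [LieRing V] [LieAlgebra ℝ V] : Prop :=
  ∃ X : Module.Basis (Fin 5) ℝ V,
    ⁅X 0, X 1⁆ = 0 ∧ ⁅X 0, X 2⁆ = 0 ∧ ⁅X 0, X 3⁆ = 0 ∧ ⁅X 0, X 4⁆ = (2 : ℝ) • X 0 ∧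
    ⁅X 1, X 2⁆ = X 0 ∧ ⁅X 1, X 3⁆ = 0 ∧ ⁅X 1, X 4⁆ = X 1 ∧
    ⁅X 2, X 3⁆ = 0 ∧ ⁅X 2, X 4⁆ = X 2 ∧ ⁅X 3, X 4⁆ = (-3 : ℝ) • X 3

/-- The Lie algebra `𝔥₃`. -/
def IsH3 (V : Type*) [LieRing V] [LieAlgebra ℝ V] : Prop :=
  ∃ X : Module.Basis (Fin 5) ℝ V,
    ⁅X 0, X 1⁆ = 0 ∧ ⁅X 0, X 2⁆ = 0 ∧ ⁅X 0, X 3⁆ = (2 : ℝ) • X 0 ∧ ⁅X 0, X 4⁆ = 0 ∧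
    ⁅X 1, X 2⁆ = X 0 ∧ ⁅X 1, X 3⁆ = X 1 ∧ ⁅X 1, X 4⁆ = -X 2 ∧
    ⁅X 2, X 3⁆ = X 2 ∧ ⁅X 2, X 4⁆ = X 1 ∧ ⁅X 3, X 4⁆ = 0

/-- The Lie algebra `𝔥₄`. -/
def IsH4 (V : Type*) [LieRing V] [LieAlgebra ℝ V] : Prop :=
  ∃ X : Module.Basis (Fin 5) ℝ V,
    ⁅X 0, X 1⁆ = 0 ∧ ⁅X 0, X 2⁆ = 0 ∧ ⁅X 0, X 3⁆ = X 0 ∧ ⁅X 0, X 4⁆ = 0 ∧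
    ⁅X 1, X 2⁆ = 0 ∧ ⁅X 1, X 3⁆ = 0 ∧ ⁅X 1, X 4⁆ = X 1 ∧
    ⁅X 2, X 3⁆ = -X 2 ∧ ⁅X 2, X 4⁆ = -X 2 ∧ ⁅X 3, X 4⁆ = 0

/-- The Lie algebra `𝔥₅`. -/
def IsH5 (V : Type*) [LieRing V] [LieAlgebra ℝ V] : Prop :=
  ∃ X : Module.Basis (Fin 5) ℝ V,
    ⁅X 0, X 1⁆ = 0 ∧ ⁅X 0, X 2⁆ = 0 ∧ ⁅X 0, X 3⁆ = 0 ∧ ⁅X 0, X 4⁆ = X 0 ∧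
    ⁅X 1, X 2⁆ = 0 ∧ ⁅X 1, X 3⁆ = X 0 ∧ ⁅X 1, X 4⁆ = 0 ∧
    ⁅X 2, X 3⁆ = X 1 ∧ ⁅X 2, X 4⁆ = -X 2 ∧ ⁅X 3, X 4⁆ = X 3

/-- `e^{ij}`, the wedge of the `i`-th and `j`-th dual basis 1-forms. -/
def bw {V : Type*} [LieRing V] [LieAlgebra ℝ V] (e : Module.Basis (Fin 5) ℝ V) (i j : Fin 5) :
    V →ₗ[ℝ] V →ₗ[ℝ] ℝ :=
  wedge1 (e.coord i) (e.coord j)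

/-- Two hypo-contact structures are *equivalent by rotation* if there is a Lie algebra
isomorphism pulling one back to a rotation of the other. -/
def EquivByRotation {V : Type*} [LieRing V] [LieAlgebra ℝ V]
    {W : Type*} [LieRing W] [LieAlgebra ℝ W]
    (η : V →ₗ[ℝ] ℝ) (ω₁ ω₂ ω₃ : V →ₗ[ℝ] V →ₗ[ℝ] ℝ)
    (η' : W →ₗ[ℝ] ℝ) (ω₁' ω₂' ω₃' : W →ₗ[ℝ] W →ₗ[ℝ] ℝ) : Prop :=
  ∃ (F : V ≃ₗ⁅ℝ⁆ W) (θ : ℝ),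
    (∀ x, η x = η' (F x)) ∧
    (∀ x y, ω₃ x y = ω₃' (F x) (F y)) ∧
    (∀ x y, ω₁ x y = Real.cos θ * ω₁' (F x) (F y) - Real.sin θ * ω₂' (F x) (F y)) ∧
    (∀ x y, ω₂ x y = Real.sin θ * ω₁' (F x) (F y) + Real.cos θ * ω₂' (F x) (F y))

set_option maxHeartbeats 2000000 in
theorem equiv_by_rotation_family6_family5 (a r : ℝ) (hr : r ≠ 0)
    (s : ℝ) (hs : s = (a^2 + r^2)/r)
    (V : Type) [LieRing V] [LieAlgebra ℝ V] (f : Module.Basis (Fin 5) ℝ V)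
    (W : Type) [LieRing W] [LieAlgebra ℝ W] (e : Module.Basis (Fin 5) ℝ W)
    (hV : (∀ x y : _, dOne (⇑(f.coord 0)) x y = 0) ∧
      (∀ x y : _, dOne (⇑(f.coord 1)) x y = (r) * bw f 0 1 x y + (a) * bw f 0 2 x y + (a) * bw f 1 3 x y + (a*(r^2+a^2)/(2*r)) * bw f 1 4 x y + (a^2/r) * bw f 2 3 x y + (a^2*(r^2+a^2)/(2*r^2)) * bw f 2 4 x y) ∧
      (∀ x y : _, dOne (⇑(f.coord 2)) x y = (a) * bw f 0 1 x y + (a^2/r) * bw f 0 2 x y + (-r) * bw f 1 3 x y + (-((r^2+a^2)/2)) * bw f 1 4 x y + (-a) * bw f 2 3 x y + (-(a*(r^2+a^2)/(2*r))) * bw f 2 4 x y) ∧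
      (∀ x y : _, dOne (⇑(f.coord 3)) x y = (-((r^2+a^2)^2/(2*r^2))) * bw f 0 4 x y + ((r^2+a^2)/r) * bw f 1 2 x y) ∧
      (∀ x y : _, dOne (⇑(f.coord 4)) x y = (-2) * bw f 0 3 x y + (-2) * bw f 1 2 x y))
    (hW : (∀ x y : _, dOne (⇑(e.coord 0)) x y = 0) ∧
      (∀ x y : _, dOne (⇑(e.coord 1)) x y = (s) * bw e 2 3 x y + (s^2/2) * bw e 2 4 x y) ∧
      (∀ x y : _, dOne (⇑(e.coord 2)) x y = (s) * bw e 0 2 x y) ∧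
      (∀ x y : _, dOne (⇑(e.coord 3)) x y = (-(s^2/2)) * bw e 0 4 x y + (s) * bw e 1 2 x y) ∧
      (∀ x y : _, dOne (⇑(e.coord 4)) x y = (-2) * bw e 0 3 x y + (-2) * bw e 1 2 x y)) :
    EquivByRotation (f.coord 4) (bw f 0 1 + bw f 2 3) (bw f 0 2 - bw f 1 3)
      (bw f 0 3 + bw f 1 2)
      (e.coord 4) (bw e 0 1 + bw e 2 3) (bw e 0 2 - bw e 1 3) (bw e 0 3 + bw e 1 2) := by
  obtain ⟨hV0, hV1, hV2, hV3, hV4⟩ := hV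
  obtain ⟨hW0, hW1, hW2, hW3, hW4⟩ := hW
  have hrs : (0:ℝ) < a^2 + r^2 := by positivity
  set l : ℝ := Real.sqrt (a^2 + r^2) with hldef
  have hl2 : l^2 = a^2 + r^2 := Real.sq_sqrt hrs.le
  have hl0 : (0:ℝ) < l := Real.sqrt_pos.mpr hrs
  have hl : l ≠ 0 := ne_of_gt hl0
  set Fl : V →ₗ[ℝ] W := f.constr ℝ ![e 0, (a/l) • e 1 + (r/l) • e 2,
      (-(r/l)) • e 1 + (a/l) • e 2, e 3, e 4] with hFldef
  set Gl : W →ₗ[ℝ] V := e.constr ℝ ![f 0, (a/l) • f 1 + (-(r/l)) • f 2,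
      (r/l) • f 1 + (a/l) • f 2, f 3, f 4] with hGldef
  have hF0 : Fl (f 0) = e 0 := by rw [hFldef, Module.Basis.constr_basis]; simp
  have hF1 : Fl (f 1) = (a/l) • e 1 + (r/l) • e 2 := by rw [hFldef, Module.Basis.constr_basis]; simp
  have hF2 : Fl (f 2) = (-(r/l)) • e 1 + (a/l) • e 2 := by rw [hFldef, Module.Basis.constr_basis]; simp
  have hF3 : Fl (f 3) = e 3 := by rw [hFldef, Module.Basis.constr_basis]; simp
  have hF4 : Fl (f 4) = e 4 := by rw [hFldef, Module.Basis.constr_basis]; simp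
  have hG0 : Gl (e 0) = f 0 := by rw [hGldef, Module.Basis.constr_basis]; simp
  have hG1 : Gl (e 1) = (a/l) • f 1 + (-(r/l)) • f 2 := by rw [hGldef, Module.Basis.constr_basis]; simp
  have hG2 : Gl (e 2) = (r/l) • f 1 + (a/l) • f 2 := by rw [hGldef, Module.Basis.constr_basis]; simp
  have hG3 : Gl (e 3) = f 3 := by rw [hGldef, Module.Basis.constr_basis]; simp
  have hG4 : Gl (e 4) = f 4 := by rw [hGldef, Module.Basis.constr_basis]; simp
  have hxV : ∀ z : V, z = (f.coord 0 z) • f 0 + (f.coord 1 z) • f 1 + (f.coord 2 z) • f 2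
      + (f.coord 3 z) • f 3 + (f.coord 4 z) • f 4 := fun z => by
    have h := (f.sum_repr z).symm; rw [Fin.sum_univ_five] at h; simpa only [Module.Basis.coord_apply] using h
  have hxW : ∀ z : W, z = (e.coord 0 z) • e 0 + (e.coord 1 z) • e 1 + (e.coord 2 z) • e 2
      + (e.coord 3 z) • e 3 + (e.coord 4 z) • e 4 := fun z => by
    have h := (e.sum_repr z).symm; rw [Fin.sum_univ_five] at h; simpa only [Module.Basis.coord_apply] using h

  have hpq : (a/l)^2 + (r/l)^2 = 1 := by field_simp; linear_combination -hl2
  have hGF : ∀ x : V, Gl (Fl x) = x := by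
    have h0 : Gl (Fl (f 0)) = f 0 := by rw [hF0, hG0]
    have h1 : Gl (Fl (f 1)) = f 1 := by
      rw [hF1]; simp only [map_add, map_smul, hG1, hG2]
      match_scalars <;> first | ring1 | linear_combination hpq | linear_combination -hpq
    have h2 : Gl (Fl (f 2)) = f 2 := by
      rw [hF2]; simp only [map_add, map_smul, hG1, hG2]
      match_scalars <;> first | ring1 | linear_combination hpq | linear_combination -hpq
    have h3 : Gl (Fl (f 3)) = f 3 := by rw [hF3, hG3]
    have h4 : Gl (Fl (f 4)) = f 4 := by rw [hF4, hG4]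
    intro x
    conv_rhs => rw [hxV x]
    conv_lhs => rw [hxV x]
    simp only [map_add, map_smul, h0, h1, h2, h3, h4]
  have hFG : ∀ x : W, Fl (Gl x) = x := by
    have h0 : Fl (Gl (e 0)) = e 0 := by rw [hG0, hF0]
    have h1 : Fl (Gl (e 1)) = e 1 := by
      rw [hG1]; simp only [map_add, map_smul, hF1, hF2]
      match_scalars <;> first | ring1 | linear_combination hpq | linear_combination -hpq
    have h2 : Fl (Gl (e 2)) = e 2 := by
      rw [hG2]; simp only [map_add, map_smul, hF1, hF2]
      match_scalars <;> first | ring1 | linear_combination hpq | linear_combination -hpq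
    have h3 : Fl (Gl (e 3)) = e 3 := by rw [hG3, hF3]
    have h4 : Fl (Gl (e 4)) = e 4 := by rw [hG4, hF4]
    intro x
    conv_rhs => rw [hxW x]
    conv_lhs => rw [hxW x]
    simp only [map_add, map_smul, h0, h1, h2, h3, h4]
  have hee : ∀ i j : Fin 5, e.coord i (e j) = if j = i then 1 else 0 := fun i j => by
    simp [Module.Basis.coord_apply, Module.Basis.repr_self, Finsupp.single_apply]
  have hFlx : ∀ x : V, Fl x = (f.coord 0 x) • e 0
      + ((a/l) * f.coord 1 x - (r/l) * f.coord 2 x) • e 1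
      + ((r/l) * f.coord 1 x + (a/l) * f.coord 2 x) • e 2
      + (f.coord 3 x) • e 3 + (f.coord 4 x) • e 4 := by
    intro x
    conv_lhs => rw [hxV x]
    simp only [map_add, map_smul, hF0, hF1, hF2, hF3, hF4]
    module
  have hc0 : ∀ x : V, e.coord 0 (Fl x) = f.coord 0 x := by
    intro x; rw [hFlx x]; simp [map_add, map_smul, hee]
  have hc1 : ∀ x : V, e.coord 1 (Fl x) = (a/l) * f.coord 1 x - (r/l) * f.coord 2 x := by
    intro x; rw [hFlx x]; simp [map_add, map_smul, hee]
  have hc2 : ∀ x : V, e.coord 2 (Fl x) = (r/l) * f.coord 1 x + (a/l) * f.coord 2 x := by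
    intro x; rw [hFlx x]; simp [map_add, map_smul, hee]
  have hc3 : ∀ x : V, e.coord 3 (Fl x) = f.coord 3 x := by
    intro x; rw [hFlx x]; simp [map_add, map_smul, hee]
  have hc4 : ∀ x : V, e.coord 4 (Fl x) = f.coord 4 x := by
    intro x; rw [hFlx x]; simp [map_add, map_smul, hee]

  have hco : ∀ (k : Fin 5) (x y : V), f.coord k ⁅x, y⁆ = -(dOne (⇑(f.coord k)) x y) :=
    fun k x y => by simp [dOne]
  have hcoW : ∀ (k : Fin 5) (x y : W), e.coord k ⁅x, y⁆ = -(dOne (⇑(e.coord k)) x y) :=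
    fun k x y => by simp [dOne]
  have hbrV : ∀ x y : V, ⁅x, y⁆ = (-(dOne (⇑(f.coord 1)) x y)) • f 1
      + (-(dOne (⇑(f.coord 2)) x y)) • f 2 + (-(dOne (⇑(f.coord 3)) x y)) • f 3
      + (-(dOne (⇑(f.coord 4)) x y)) • f 4 := by
    intro x y
    conv_lhs => rw [hxV ⁅x, y⁆]
    rw [hco 0, hco 1, hco 2, hco 3, hco 4, hV0 x y]
    module
  have hbrW : ∀ x y : W, ⁅x, y⁆ = (-(dOne (⇑(e.coord 1)) x y)) • e 1
      + (-(dOne (⇑(e.coord 2)) x y)) • e 2 + (-(dOne (⇑(e.coord 3)) x y)) • e 3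
      + (-(dOne (⇑(e.coord 4)) x y)) • e 4 := by
    intro x y
    conv_lhs => rw [hxW ⁅x, y⁆]
    rw [hcoW 0, hcoW 1, hcoW 2, hcoW 3, hcoW 4, hW0 x y]
    module
  have hbw : ∀ (i j : Fin 5) (x y : V),
      bw f i j x y = f.coord i x * f.coord j y - f.coord i y * f.coord j x :=
    fun i j x y => by simp [bw, wedge1]
  have hbwE : ∀ (i j : Fin 5) (x y : W),
      bw e i j x y = e.coord i x * e.coord j y - e.coord i y * e.coord j x :=
    fun i j x y => by simp [bw, wedge1]
  have hC01 : ∀ x y : V, bw e 0 1 (Fl x) (Fl y)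
      = (a/l) * bw f 0 1 x y - (r/l) * bw f 0 2 x y := by
    intro x y
    simp only [hbwE, hbw, hc0, hc1, hc2, hc3, hc4]; try ring
  have hC02 : ∀ x y : V, bw e 0 2 (Fl x) (Fl y)
      = (r/l) * bw f 0 1 x y + (a/l) * bw f 0 2 x y := by
    intro x y
    simp only [hbwE, hbw, hc0, hc1, hc2, hc3, hc4]; try ring
  have hC03 : ∀ x y : V, bw e 0 3 (Fl x) (Fl y) = bw f 0 3 x y := by
    intro x y
    simp only [hbwE, hbw, hc0, hc1, hc2, hc3, hc4]; try ring
  have hC04 : ∀ x y : V, bw e 0 4 (Fl x) (Fl y) = bw f 0 4 x y := by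
    intro x y
    simp only [hbwE, hbw, hc0, hc1, hc2, hc3, hc4]; try ring
  have hC12 : ∀ x y : V, bw e 1 2 (Fl x) (Fl y) = bw f 1 2 x y := by
    intro x y
    simp only [hbwE, hbw, hc0, hc1, hc2, hc3, hc4]
    linear_combination ((f.coord 1) x * (f.coord 2) y - (f.coord 1) y * (f.coord 2) x) * hpq
  have hC13 : ∀ x y : V, bw e 1 3 (Fl x) (Fl y)
      = (a/l) * bw f 1 3 x y - (r/l) * bw f 2 3 x y := by
    intro x y
    simp only [hbwE, hbw, hc0, hc1, hc2, hc3, hc4]; try ring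
  have hC14 : ∀ x y : V, bw e 1 4 (Fl x) (Fl y)
      = (a/l) * bw f 1 4 x y - (r/l) * bw f 2 4 x y := by
    intro x y
    simp only [hbwE, hbw, hc0, hc1, hc2, hc3, hc4]; try ring
  have hC23 : ∀ x y : V, bw e 2 3 (Fl x) (Fl y)
      = (r/l) * bw f 1 3 x y + (a/l) * bw f 2 3 x y := by
    intro x y
    simp only [hbwE, hbw, hc0, hc1, hc2, hc3, hc4]; try ring
  have hC24 : ∀ x y : V, bw e 2 4 (Fl x) (Fl y)
      = (r/l) * bw f 1 4 x y + (a/l) * bw f 2 4 x y := by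
    intro x y
    simp only [hbwE, hbw, hc0, hc1, hc2, hc3, hc4]; try ring
  have key : ∀ x y : V, Fl ⁅x, y⁆ = ⁅Fl x, Fl y⁆ := by
    intro x y
    rw [hbrV x y, hbrW (Fl x) (Fl y)]
    rw [hV1 x y, hV2 x y, hV3 x y, hV4 x y,
      hW1 (Fl x) (Fl y), hW2 (Fl x) (Fl y), hW3 (Fl x) (Fl y), hW4 (Fl x) (Fl y)]
    simp only [map_add, map_smul, hF1, hF2, hF3, hF4]
    rw [hC23, hC24, hC02, hC04, hC12, hC03]
    rw [hs]
    match_scalars <;> field_simp <;> ring1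

  -- the angle
  have haal : |a| ≤ l := by
    rw [hldef, ← Real.sqrt_sq_eq_abs]
    exact Real.sqrt_le_sqrt (by nlinarith)
  have habs : |a/l| ≤ 1 := by
    rw [abs_div, abs_of_pos hl0]
    exact div_le_one_of_le₀ haal hl0.le
  obtain ⟨hd1, hd2⟩ := abs_le.mp habs
  have hsinarc : Real.sin (Real.arccos (a/l)) = |r|/l := by
    rw [Real.sin_arccos, show 1 - (a/l)^2 = (r/l)^2 by linear_combination -hpq,
      Real.sqrt_sq_eq_abs, abs_div, abs_of_pos hl0]
  set θ : ℝ := if 0 ≤ r then -(Real.arccos (a/l)) else Real.arccos (a/l) with hθ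
  have hcos : Real.cos θ = a/l := by
    rw [hθ]; split_ifs <;> simp [Real.cos_arccos hd1 hd2]
  have hsin : Real.sin θ = -(r/l) := by
    rw [hθ]; split_ifs with h
    · rw [Real.sin_neg, hsinarc, abs_of_nonneg h]
    · rw [hsinarc, abs_of_neg (lt_of_not_ge h)]; ring
  -- assemble the Lie algebra isomorphism
  refine ⟨⟨⟨Fl, fun {x y} => key x y⟩, Gl, hGF, hFG⟩, θ, ?_, ?_, ?_, ?_⟩
  · intro x
    exact (hc4 x).symm
  · intro x y
    simp only [LinearMap.add_apply]
    show bw f 0 3 x y + bw f 1 2 x y = bw e 0 3 (Fl x) (Fl y) + bw e 1 2 (Fl x) (Fl y)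
    rw [hC03, hC12]
  · intro x y
    simp only [LinearMap.add_apply, LinearMap.sub_apply]
    show bw f 0 1 x y + bw f 2 3 x y
      = Real.cos θ * (bw e 0 1 (Fl x) (Fl y) + bw e 2 3 (Fl x) (Fl y))
        - Real.sin θ * (bw e 0 2 (Fl x) (Fl y) - bw e 1 3 (Fl x) (Fl y))
    rw [hcos, hsin, hC01, hC23, hC02, hC13]
    first
      | linear_combination (bw f 0 1 x y + bw f 2 3 x y) * hpq
      | linear_combination (-(bw f 0 1 x y + bw f 2 3 x y)) * hpq
  · intro x y
    simp only [LinearMap.add_apply, LinearMap.sub_apply]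
    show bw f 0 2 x y - bw f 1 3 x y
      = Real.sin θ * (bw e 0 1 (Fl x) (Fl y) + bw e 2 3 (Fl x) (Fl y))
        + Real.cos θ * (bw e 0 2 (Fl x) (Fl y) - bw e 1 3 (Fl x) (Fl y))
    rw [hcos, hsin, hC01, hC23, hC02, hC13]
    first
      | linear_combination (bw f 0 2 x y - bw f 1 3 x y) * hpq
      | linear_combination (-(bw f 0 2 x y - bw f 1 3 x y)) * hpq



end
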